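/- arXiv:2006.01530 — 4 statements merged into one kernel-verified Lean document; each statement's English description precedes it below -/
import Mathlib

section
/- Let 0 < x_n ≤ x_{n−1} ≤ … ≤ x_1 be positive reals and 1 ≤ k ≤ n−1. Then for every index i, x_1 · e_{k−1}(x with x_1 omitted) ≥ x_i · e_{k−1}(x with x_i omitted), where e_{k−1} denotes the elementary symmetric polynomial of degree k−1 in n−1 variables. -/
/-- `k`-th elementary symmetric polynomial of `x` over the index set `s`. -/
def esymFin {n : ℕ} (s : Finset (Fin n)) (k : ℕ) (x : Fin n → ℝ) : ℝ :=
  ∑ t ∈ s.powersetCard k, ∏ i ∈ t, x i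

lemma esymFin_nonneg {n : ℕ} (s : Finset (Fin n)) (k : ℕ) (x : Fin n → ℝ)
    (hpos : ∀ i, 0 < x i) : 0 ≤ esymFin s k x := by
  refine Finset.sum_nonneg fun t _ => Finset.prod_nonneg fun j _ => (hpos j).le

lemma esymFin_zero {n : ℕ} (s : Finset (Fin n)) (x : Fin n → ℝ) :
    esymFin s 0 x = 1 := by
  simp [esymFin]

lemma esymFin_insert {n : ℕ} (s : Finset (Fin n)) (a : Fin n) (ha : a ∉ s) (k : ℕ)
    (x : Fin n → ℝ) :
    esymFin (insert a s) (k + 1) x = esymFin s (k + 1) x + x a * esymFin s k x := by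
  unfold esymFin
  rw [Finset.powersetCard_succ_insert ha]
  rw [Finset.sum_union]
  · rw [Finset.sum_image]
    · rw [Finset.mul_sum]
      congr 1
      refine Finset.sum_congr rfl fun t ht => ?_
      rw [Finset.prod_insert]
      intro hat
      exact ha ((Finset.mem_powersetCard.mp ht).1 hat)
    · intro t ht u hu htu
      have hat : a ∉ t := fun hat => ha ((Finset.mem_powersetCard.mp ht).1 hat)
      have hau : a ∉ u := fun hau => ha ((Finset.mem_powersetCard.mp hu).1 hau)
      have := congrArg (Finset.erase · a) htu
      simpa [Finset.erase_insert hat, Finset.erase_insert hau] using this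
  · rw [Finset.disjoint_left]
    intro t ht ht'
    have hat : a ∉ t := fun hat => ha ((Finset.mem_powersetCard.mp ht).1 hat)
    obtain ⟨u, _, rfl⟩ := Finset.mem_image.mp ht'
    exact hat (Finset.mem_insert_self a u)

/-- For positive decreasing reals `x₁ ≥ x₂ ≥ … ≥ xₙ > 0` (indexed so that `x 0` is the
largest) and `1 ≤ k ≤ n−1`, for every `i`:
`x₁ · e_{k−1}(x omitting x₁) ≥ x_i · e_{k−1}(x omitting x_i)`. -/
theorem stmt_7 (n : ℕ) (hn : 2 ≤ n) (x : Fin n → ℝ) (hpos : ∀ i, 0 < x i)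
    (hmono : ∀ i j : Fin n, i ≤ j → x j ≤ x i)
    (k : ℕ) (hk1 : 1 ≤ k) (hk2 : k ≤ n - 1) (i : Fin n) :
    x i * esymFin (Finset.univ.erase i) (k - 1) x ≤
      x ⟨0, by omega⟩ * esymFin (Finset.univ.erase ⟨0, by omega⟩) (k - 1) x := by
  set z : Fin n := ⟨0, by omega⟩ with hz
  have hzi : z ≤ i := by rw [Fin.le_def]; exact Nat.zero_le _
  have hxzi : x i ≤ x z := hmono z i hzi
  by_cases hiz : i = z
  · rw [hiz]
  · set s : Finset (Fin n) := (Finset.univ.erase z).erase i with hs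
    have hi_mem : i ∈ (Finset.univ : Finset (Fin n)).erase z :=
      Finset.mem_erase.mpr ⟨hiz, Finset.mem_univ i⟩
    have hz_mem : z ∈ (Finset.univ : Finset (Fin n)).erase i :=
      Finset.mem_erase.mpr ⟨fun h => hiz h.symm, Finset.mem_univ z⟩
    have h1 : (Finset.univ : Finset (Fin n)).erase z = insert i s :=
      (Finset.insert_erase hi_mem).symm
    have h2 : (Finset.univ : Finset (Fin n)).erase i = insert z s := by
      rw [hs, Finset.erase_right_comm]
      exact (Finset.insert_erase hz_mem).symm
    have his : i ∉ s := Finset.notMem_erase i _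
    have hzs : z ∉ s := by
      rw [hs, Finset.erase_right_comm]
      exact Finset.notMem_erase z _
    obtain ⟨m, hm⟩ : ∃ m, k - 1 = m := ⟨k - 1, rfl⟩
    rw [hm, h1, h2]
    cases m with
    | zero =>
      rw [esymFin_zero, esymFin_zero]
      simpa using hxzi
    | succ m =>
      rw [esymFin_insert s i his m x, esymFin_insert s z hzs m x]
      have hA : 0 ≤ esymFin s (m + 1) x := esymFin_nonneg s (m + 1) x hpos
      have hB : 0 ≤ esymFin s m x := esymFin_nonneg s m x hpos
      nlinarith [hpos i, hpos z]
end

section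
/- Let n ≥ 2, 1 ≤ ζ ≤ n−1, and c > 0. Let y_1, …, y_n be positive reals such that for every index i, (c / (2·C(n,ζ))) · e_{n−ζ}(y with y_i omitted) < 1. Then e_n(y)^{n−ζ} < (2n/(ζ·c))^n. -/
open Finset in
private lemma amgm9 {ι : Type*} (s : Finset ι) (hs : s.Nonempty) (f : ι → ℝ)
    (hf : ∀ i ∈ s, 0 ≤ f i) :
    ∏ i ∈ s, f i ≤ ((∑ i ∈ s, f i) / s.card) ^ s.card := by
  have hN : (0:ℝ) < s.card := by exact_mod_cast card_pos.mpr hs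
  have h := Real.geom_mean_le_arith_mean_weighted s (fun _ => (s.card : ℝ)⁻¹) f
    (fun i _ => by positivity)
    (by simp [Finset.sum_const, mul_inv_cancel₀ hN.ne'])
    hf
  have hP : 0 ≤ ∏ i ∈ s, f i := Finset.prod_nonneg hf
  have h2 : (∏ i ∈ s, f i) ^ ((s.card:ℝ)⁻¹) ≤ (∑ i ∈ s, f i) / s.card := by
    rw [← Real.finset_prod_rpow s f hf]
    refine h.trans_eq ?_
    rw [← Finset.mul_sum, div_eq_inv_mul]
  calc ∏ i ∈ s, f i = ((∏ i ∈ s, f i) ^ ((s.card:ℝ)⁻¹)) ^ (s.card : ℕ) := by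
        rw [← Real.rpow_natCast ((∏ i ∈ s, f i) ^ ((s.card:ℝ)⁻¹)), ← Real.rpow_mul hP,
          inv_mul_cancel₀ hN.ne', Real.rpow_one]
    _ ≤ _ := pow_le_pow_left₀ (Real.rpow_nonneg hP _) h2 _

open Finset in
private lemma card_filter_mem9 {α : Type*} [DecidableEq α] {s : Finset α} {j : α} (hj : j ∈ s)
    (d : ℕ) :
    ((s.powersetCard (d+1)).filter (fun t => j ∈ t)).card = (s.card - 1).choose d := by
  rw [← card_erase_of_mem hj, ← Finset.card_powersetCard d (s.erase j)]
  apply Finset.card_bij (fun t _ => t.erase j)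
  · intro t ht
    simp only [mem_filter, mem_powersetCard] at ht
    simp only [mem_powersetCard]
    exact ⟨fun x hx => mem_erase.mpr ⟨(mem_erase.mp hx).1, ht.1.1 (mem_erase.mp hx).2⟩,
      by simp [card_erase_of_mem ht.2, ht.1.2]⟩
  · intro a ha b hb h
    simp only [mem_filter] at ha hb
    rw [← insert_erase ha.2, ← insert_erase hb.2, h]
  · intro u hu
    simp only [mem_powersetCard] at hu
    have hju : j ∉ u := fun h => (mem_erase.mp (hu.1 h)).1 rfl
    refine ⟨insert j u, ?_, by simp [hju]⟩
    simp only [mem_filter, mem_powersetCard]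
    exact ⟨⟨insert_subset hj (hu.1.trans (erase_subset _ _)),
      by rw [card_insert_of_notMem hju, hu.2]⟩, mem_insert_self _ _⟩

open Finset in
private lemma prod_powersetCard9 {α : Type*} [DecidableEq α] (s : Finset α) (d : ℕ)
    (hd : 1 ≤ d) (f : α → ℝ) :
    ∏ t ∈ s.powersetCard d, ∏ j ∈ t, f j = (∏ j ∈ s, f j) ^ ((s.card - 1).choose (d-1)) := by
  obtain ⟨d', rfl⟩ : ∃ d', d = d' + 1 := ⟨d - 1, by omega⟩
  have step : ∀ t ∈ s.powersetCard (d'+1), ∏ j ∈ t, f j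
      = ∏ j ∈ s, (if j ∈ t then f j else 1) := by
    intro t ht
    rw [Finset.prod_ite, Finset.prod_const_one, mul_one]
    congr 1
    rw [Finset.filter_mem_eq_inter, Finset.inter_eq_right.mpr (mem_powersetCard.mp ht).1]
  rw [Finset.prod_congr rfl step, Finset.prod_comm]
  have step2 : ∀ j ∈ s, ∏ t ∈ s.powersetCard (d'+1), (if j ∈ t then f j else 1)
      = f j ^ ((s.card - 1).choose d') := by
    intro j hj
    rw [Finset.prod_ite, Finset.prod_const, Finset.prod_const_one, mul_one,
      card_filter_mem9 hj d']
  rw [Finset.prod_congr rfl step2, ← Finset.prod_pow]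
  norm_num

private lemma choose_id9 (a b : ℕ) (hb : 1 ≤ b) (hba : b ≤ a) :
    a.choose b * b = a * (a-1).choose (b-1) := by
  obtain ⟨b', rfl⟩ : ∃ b', b = b'+1 := ⟨b-1, by omega⟩
  obtain ⟨a', rfl⟩ : ∃ a', a = a'+1 := ⟨a-1, by omega⟩
  simpa [Nat.mul_comm] using (Nat.add_one_mul_choose_eq a' b').symm

/-- If `(c/(2·C(n,ζ))) · e_{n−ζ}(y omitting i) < 1` for every `i`, with `n ≥ 2`,
`1 ≤ ζ ≤ n−1` and `c > 0`, then `e_n(y)^{n−ζ} < (2n/(ζc))^n`. -/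
theorem stmt_9 (n ζ : ℕ) (hn : 2 ≤ n) (hζ1 : 1 ≤ ζ) (hζ2 : ζ ≤ n - 1)
    (c : ℝ) (hc : 0 < c) (y : Fin n → ℝ) (hy : ∀ i, 0 < y i)
    (hcone : ∀ i : Fin n,
      c / (2 * (n.choose ζ : ℝ)) * esymFin (Finset.univ.erase i) (n - ζ) y < 1) :
    (esymFin Finset.univ n y) ^ (n - ζ) < (2 * (n : ℝ) / ((ζ : ℝ) * c)) ^ n := by
  classical
  haveI : NeZero n := ⟨by omega⟩
  set d := n - ζ with hddef
  have hd1 : 1 ≤ d := by omega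
  have hdn : d ≤ n - 1 := by omega
  have hnn : (Finset.univ : Finset (Fin n)).card = n := by simp
  have hps : (Finset.univ : Finset (Fin n)).powersetCard n = {Finset.univ} := by
    simpa using Finset.powersetCard_self (Finset.univ : Finset (Fin n))
  have hP : esymFin Finset.univ n y = ∏ i, y i := by
    rw [esymFin, hps, Finset.sum_singleton]
  set P := ∏ i, y i with hPdef
  have hPpos : 0 < P := Finset.prod_pos (fun i _ => hy i)
  set M : ℝ := 2 * n / (ζ * c) with hM
  have hζpos : (0:ℝ) < ζ := by exact_mod_cast hζ1
  have hnpos : (0:ℝ) < n := by positivity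
  have hMpos : 0 < M := by positivity
  -- key pointwise estimate
  have key : ∀ i : Fin n, (∏ j ∈ Finset.univ.erase i, y j) ^ d < M ^ (n-1) := by
    intro i
    set s : Finset (Fin n) := Finset.univ.erase i with hsdef
    have hscard : s.card = n - 1 := by
      rw [hsdef, Finset.card_erase_of_mem (Finset.mem_univ i), hnn]
    set Pi := ∏ j ∈ s, y j with hPidef
    have hPipos : 0 < Pi := Finset.prod_pos (fun j _ => hy j)
    set N := (n-1).choose d with hNdef
    have hNpos : 0 < N := Nat.choose_pos hdn
    have hNR : (0:ℝ) < N := by exact_mod_cast hNpos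
    have hpne : (s.powersetCard d).Nonempty :=
      Finset.powersetCard_nonempty.mpr (by omega)
    have hecard : (s.powersetCard d).card = N := by
      rw [Finset.card_powersetCard, hscard]
    set e := esymFin s d y with hedef
    have hepos : 0 < e := by
      refine Finset.sum_pos (fun t ht => Finset.prod_pos fun j _ => hy j) hpne
    have hCpos : (0:ℝ) < n.choose ζ := by
      exact_mod_cast Nat.choose_pos (by omega : ζ ≤ n)
    have heB : e < 2 * (n.choose ζ : ℝ) / c := by
      have h := hcone i
      rw [div_mul_eq_mul_div, div_lt_one (by positivity)] at h
      rw [lt_div_iff₀ hc]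
      nlinarith
    set m := (n-2).choose (d-1) with hmdef
    have hAG : Pi ^ m ≤ (e / N) ^ N := by
      have h := amgm9 (s.powersetCard d) hpne (fun t => ∏ j ∈ t, y j)
        (fun t _ => Finset.prod_nonneg fun j _ => (hy j).le)
      rw [prod_powersetCard9 s d hd1 y, hscard, hecard] at h
      have hsub : n - 1 - 1 = n - 2 := by omega
      rw [hsub] at h
      exact h
    -- arithmetic identity: (2C/c)/N = M
    have hnat : (n.choose ζ) * ζ = n * ((n-1).choose d) := by
      have h1 : (n-1).choose d = (n-1).choose (ζ-1) := by
        rw [← Nat.choose_symm (by omega : ζ - 1 ≤ n - 1)]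
        congr 1
        omega
      rw [h1]
      exact choose_id9 n ζ hζ1 (by omega)
    have hr : (n.choose ζ : ℝ) * ζ = n * N := by exact_mod_cast hnat
    have hBN : (2 * (n.choose ζ : ℝ) / c) / N = M := by
      rw [hM]
      field_simp
      nlinarith [hr]
    have hstep : Pi ^ m < M ^ N := by
      calc Pi ^ m ≤ (e / N) ^ N := hAG
        _ < ((2 * (n.choose ζ : ℝ) / c) / N) ^ N := by
            apply pow_lt_pow_left₀ _ (by positivity) hNpos.ne'
            gcongr
        _ = M ^ N := by rw [hBN]
    have hmN : m * (n-1) = d * N := by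
      have h2 := choose_id9 (n-1) d hd1 hdn
      rw [(by omega : n - 1 - 1 = n - 2)] at h2
      calc m * (n-1) = (n-1) * m := Nat.mul_comm _ _
        _ = N * d := h2.symm
        _ = d * N := Nat.mul_comm _ _
    have hfin : (Pi ^ d) ^ N < (M ^ (n-1)) ^ N := by
      calc (Pi ^ d) ^ N = (Pi ^ m) ^ (n-1) := by
            rw [← pow_mul, ← pow_mul, ← hmN, Nat.mul_comm]
        _ < (M ^ N) ^ (n-1) :=
            pow_lt_pow_left₀ hstep (by positivity) (by omega)
        _ = (M ^ (n-1)) ^ N := by rw [← pow_mul, ← pow_mul, Nat.mul_comm]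
    exact lt_of_pow_lt_pow_left₀ N (by positivity) hfin
  -- combine over all i
  have hprodP : (∏ i : Fin n, ∏ j ∈ Finset.univ.erase i, y j) = P ^ (n-1) := by
    have h1 : (∏ i : Fin n, ∏ j ∈ Finset.univ.erase i, y j) * P = P ^ (n-1) * P := by
      calc (∏ i : Fin n, ∏ j ∈ Finset.univ.erase i, y j) * (∏ i, y i)
          = ∏ i : Fin n, ((∏ j ∈ Finset.univ.erase i, y j) * y i) :=
            (Finset.prod_mul_distrib).symm
        _ = ∏ _i : Fin n, P :=
            Finset.prod_congr rfl fun i _ => Finset.prod_erase_mul _ _ (Finset.mem_univ i)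
        _ = P ^ n := by rw [Finset.prod_const, hnn]
        _ = P ^ (n-1) * P := by rw [← pow_succ]; congr 1; omega
    exact mul_right_cancel₀ hPpos.ne' h1
  have hlt : ∏ i : Fin n, (∏ j ∈ Finset.univ.erase i, y j) ^ d
      < ∏ _i : Fin n, M ^ (n-1) := by
    refine Finset.prod_lt_prod_of_nonempty
      (fun i _ => pow_pos (Finset.prod_pos fun j _ => hy j) d)
      (fun i _ => key i) (Finset.univ_nonempty (α := Fin n))
  rw [Finset.prod_pow, hprodP, Finset.prod_const, hnn] at hlt
  rw [hP]
  refine lt_of_pow_lt_pow_left₀ (n-1) (by positivity) ?_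
  calc (P ^ d) ^ (n-1) = (P ^ (n-1)) ^ d := by
        rw [← pow_mul, ← pow_mul, Nat.mul_comm]
    _ < (M ^ (n-1)) ^ n := hlt
    _ = (M ^ n) ^ (n-1) := by rw [← pow_mul, ← pow_mul, Nat.mul_comm]
end

section
/- Let n ≥ 2, 1 ≤ ζ ≤ n−1 with 2ζ ≥ n, and c > 0. Let λ_1, …, λ_n > 0 satisfy, for every index i, (c/(2·C(n,ζ))) · e_{n−ζ}(1/λ with index i omitted) < 1. Then for every ζ-element subset I of {1,…,n}, the product ∏_{j ∈ I} λ_j > (c/(2·C(n,ζ)))^{ζ/(n−ζ)}. -/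
open Finset in
lemma count_aux {α : Type*} [DecidableEq α] (s : Finset α) (m : ℕ) (hm : 1 ≤ m) (j : α)
    (hj : j ∈ s) :
    #((s.powersetCard m).filter (fun T => j ∈ T)) = (#s - 1).choose (m - 1) := by
  have heq : #((s.powersetCard m).filter (fun T => j ∈ T)) =
      #((s.erase j).powersetCard (m - 1)) := by
    refine Finset.card_nbij' (fun T => T.erase j) (fun T => insert j T) ?_ ?_ ?_ ?_
    · intro T hT
      simp only [mem_coe, mem_filter, mem_powersetCard] at hT
      obtain ⟨⟨hTs, hTc⟩, hjT⟩ := hT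
      rw [mem_coe, mem_powersetCard]
      constructor
      · intro x hx
        rw [mem_erase] at hx ⊢
        exact ⟨hx.1, hTs hx.2⟩
      · rw [card_erase_of_mem hjT, hTc]
    · intro T hT
      rw [mem_coe, mem_powersetCard] at hT
      obtain ⟨hTs, hTc⟩ := hT
      have hjT : j ∉ T := fun h => (mem_erase.mp (hTs h)).1 rfl
      simp only [mem_coe, mem_filter, mem_powersetCard]
      refine ⟨⟨?_, ?_⟩, mem_insert_self _ _⟩
      · intro x hx
        rcases mem_insert.mp hx with h | h
        · exact h ▸ hj
        · exact (mem_erase.mp (hTs h)).2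
      · rw [card_insert_of_notMem hjT, hTc]; omega
    · intro T hT
      simp only [mem_coe, mem_filter] at hT
      exact insert_erase hT.2
    · intro T hT
      rw [mem_coe, mem_powersetCard] at hT
      have hjT : j ∉ T := fun h => (mem_erase.mp (hT.1 h)).1 rfl
      exact erase_insert hjT
  rw [heq, Finset.card_powersetCard, Finset.card_erase_of_mem hj]

open Finset in
lemma prod_prod_powersetCard {α : Type*} [DecidableEq α] (s : Finset α) (m : ℕ) (hm : 1 ≤ m)
    (f : α → ℝ) :
    ∏ T ∈ s.powersetCard m, ∏ j ∈ T, f j = (∏ j ∈ s, f j) ^ (#s - 1).choose (m - 1) := by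
  rw [Finset.prod_comm' (s' := fun j => (s.powersetCard m).filter (fun T => j ∈ T)) (t' := s)
    (by
      intro T j
      simp only [mem_filter, mem_powersetCard]
      constructor
      · rintro ⟨⟨hTs, hTc⟩, hjT⟩
        exact ⟨⟨⟨hTs, hTc⟩, hjT⟩, hTs hjT⟩
      · rintro ⟨⟨⟨hTs, hTc⟩, hjT⟩, _⟩
        exact ⟨⟨hTs, hTc⟩, hjT⟩)]
  rw [← Finset.prod_pow]
  refine Finset.prod_congr rfl fun j hj => ?_
  rw [Finset.prod_const, count_aux s m hm j hj]

/-- Under the cone condition `(c/(2C(n,ζ)))·e_{n−ζ}(1/λ omitting i) < 1` for all `i`,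
with `2ζ ≥ n`, every product of the `λ_j` over a `ζ`-element subset exceeds
`(c/(2C(n,ζ)))^{ζ/(n−ζ)}`. -/
theorem stmt_14 (n ζ : ℕ) (hn : 2 ≤ n) (hζ1 : 1 ≤ ζ) (hζ2 : ζ ≤ n - 1) (hζ3 : n ≤ 2 * ζ)
    (c : ℝ) (hc : 0 < c) (lam : Fin n → ℝ) (hlam : ∀ i, 0 < lam i)
    (hcone : ∀ i : Fin n,
      c / (2 * (n.choose ζ : ℝ)) *
        esymFin (Finset.univ.erase i) (n - ζ) (fun j => 1 / lam j) < 1) :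
    ∀ I ∈ Finset.univ.powersetCard ζ,
      (c / (2 * (n.choose ζ : ℝ))) ^ ((ζ : ℝ) / ((n : ℝ) - ζ)) < ∏ j ∈ I, lam j := by
  classical
  intro I hI
  rw [Finset.mem_powersetCard] at hI
  obtain ⟨-, hIcard⟩ := hI
  set a := c / (2 * (n.choose ζ : ℝ)) with ha
  have hchoose : 0 < n.choose ζ := Nat.choose_pos (by omega)
  have hapos : 0 < a := div_pos hc (by positivity)
  set m := n - ζ with hmdef
  have hm1 : 1 ≤ m := by omega
  have hmζ : m ≤ ζ := by omega
  -- find i ∉ I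
  have hcompl : Iᶜ.Nonempty := by
    rw [← Finset.card_pos, Finset.card_compl, hIcard, Fintype.card_fin]
    omega
  obtain ⟨i, hi⟩ := hcompl
  have hiI : i ∉ I := Finset.mem_compl.mp hi
  -- every m-subset T of I has product > a
  have key : ∀ T ∈ I.powersetCard m, a < ∏ j ∈ T, lam j := by
    intro T hT
    rw [Finset.mem_powersetCard] at hT
    obtain ⟨hTI, hTc⟩ := hT
    have hTP : 0 < ∏ j ∈ T, lam j := Finset.prod_pos fun j _ => hlam j
    have hTe : T ∈ (Finset.univ.erase i).powersetCard m := by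
      rw [Finset.mem_powersetCard]
      refine ⟨fun x hx => Finset.mem_erase.mpr ⟨?_, Finset.mem_univ x⟩, hTc⟩
      rintro rfl; exact hiI (hTI hx)
    have hterm : (∏ j ∈ T, 1 / lam j) ≤
        esymFin (Finset.univ.erase i) (n - ζ) (fun j => 1 / lam j) := by
      unfold esymFin
      rw [← hmdef]
      refine Finset.single_le_sum (f := fun t => ∏ i ∈ t, 1 / lam i) ?_ hTe
      intro t _
      exact Finset.prod_nonneg fun j _ => (one_div_pos.mpr (hlam j)).le
    have h1 : a * (∏ j ∈ T, 1 / lam j) < 1 :=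
      (mul_le_mul_of_nonneg_left hterm hapos.le).trans_lt (hcone i)
    have hprodinv : (∏ j ∈ T, 1 / lam j) = (∏ j ∈ T, lam j)⁻¹ := by
      rw [← Finset.prod_inv_distrib]
      exact Finset.prod_congr rfl fun j _ => one_div _
    rw [hprodinv, ← div_eq_mul_inv, div_lt_one hTP] at h1
    exact h1
  -- multiply over all m-subsets of I
  set k := (ζ - 1).choose (m - 1) with hkdef
  have hk1 : 1 ≤ k := Nat.choose_pos (by omega)
  have hPne : (I.powersetCard m).Nonempty :=
    Finset.powersetCard_nonempty.mpr (hIcard ▸ hmζ)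
  have hbig : a ^ ζ.choose m < (∏ j ∈ I, lam j) ^ k := by
    have h1 : ∏ _T ∈ I.powersetCard m, a < ∏ T ∈ I.powersetCard m, ∏ j ∈ T, lam j :=
      Finset.prod_lt_prod_of_nonempty (fun _ _ => hapos) key hPne
    rwa [Finset.prod_const, Finset.card_powersetCard, hIcard,
      prod_prod_powersetCard I m hm1 lam, hIcard] at h1
  have hIP : 0 < ∏ j ∈ I, lam j := Finset.prod_pos fun j _ => hlam j
  -- the exponent identity
  have hnat : ζ * k = ζ.choose m * m := by
    have := Nat.add_one_mul_choose_eq (ζ - 1) (m - 1)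
    have hms : m - 1 + 1 = m := by omega
    have hzs : ζ - 1 + 1 = ζ := by omega
    rw [hms, hzs] at this
    exact this
  have hmcast : ((n : ℝ) - ζ) = (m : ℝ) := by
    rw [hmdef, Nat.cast_sub (by omega)]
  have hmne : (m : ℝ) ≠ 0 := by positivity
  have hexp : (ζ : ℝ) / ((n : ℝ) - ζ) * k = (ζ.choose m : ℝ) := by
    rw [hmcast]
    field_simp
    exact_mod_cast hnat.trans (mul_comm _ _)
  have hbk : (a ^ ((ζ : ℝ) / ((n : ℝ) - ζ))) ^ k = a ^ ζ.choose m := by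
    rw [← Real.rpow_natCast (a ^ ((ζ : ℝ) / ((n : ℝ) - ζ))) k,
      ← Real.rpow_mul hapos.le, hexp, Real.rpow_natCast]
  by_contra hcon
  push_neg at hcon
  have : (∏ j ∈ I, lam j) ^ k ≤ (a ^ ((ζ : ℝ) / ((n : ℝ) - ζ))) ^ k :=
    pow_le_pow_left₀ hIP.le hcon k
  rw [hbk] at this
  exact absurd (lt_of_lt_of_le hbig this) (lt_irrefl _)
end

section
/- Let n ≥ 2, 1 ≤ ζ ≤ n−1 with 2ζ ≥ n, c > 0, and let K > 0 be the smallest eigenvalue of the matrix Σ_{|I|=ζ} E_I (so K = C(n−2, ζ−1)). Let f_m ≥ 0 satisfy f_m < (K/n)·(c/(2·C(n,ζ)))^{n/(n−ζ)}. Let λ_1,…,λ_n > 0 satisfy, for every i, (c/(2·C(n,ζ)))·e_{n−ζ}(1/λ omitting i) < 1. Then the n×n matrix M with entries M_{ij} = (c/C(n,ζ)) · Σ_{|I|=ζ} λ_I · (E_I)_{ij} − f_m·1, where λ_I = ∏_{j∈I} λ_j, (E_I)_{ij} = 1 if i,j ∉ I and 0 otherwise, and 1 is the all-ones matrix, is positive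 definite. -/
open Matrix

lemma aux_filter_not_mem {α : Type*} [DecidableEq α] (s : Finset α) (k : ℕ) (j : α) :
    (s.powersetCard k).filter (fun t => j ∉ t) = (s.erase j).powersetCard k := by
  ext t
  simp only [Finset.mem_filter, Finset.mem_powersetCard, Finset.subset_erase]
  tauto

lemma aux_card_filter_mem {α : Type*} [DecidableEq α] (I : Finset α) (k : ℕ) (j : α) (hj : j ∈ I) :
    ((I.powersetCard k).filter (fun t => j ∈ t)).card
      = I.card.choose k - (I.card - 1).choose k := by
  have h1 := Finset.card_filter_add_card_filter_not
    (s := I.powersetCard k) (p := fun t => j ∈ t)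
  have h2 : (I.powersetCard k).filter (fun t => ¬ j ∈ t) = (I.erase j).powersetCard k :=
    aux_filter_not_mem I k j
  rw [h2, Finset.card_powersetCard, Finset.card_powersetCard,
    Finset.card_erase_of_mem hj] at h1
  omega

lemma aux_prod_powersetCard {α : Type*} [DecidableEq α] (I : Finset α) (k : ℕ) (f : α → ℝ) :
    ∏ t ∈ I.powersetCard k, ∏ j ∈ t, f j
      = ∏ j ∈ I, f j ^ ((I.powersetCard k).filter (fun t => j ∈ t)).card := by
  have h1 : ∀ t ∈ I.powersetCard k, ∏ j ∈ t, f j = ∏ j ∈ I, (if j ∈ t then f j else 1) := by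
    intro t ht
    rw [← Finset.prod_filter]
    congr 1
    rw [Finset.filter_mem_eq_inter]
    exact (Finset.inter_eq_right.2 (Finset.mem_powersetCard.1 ht).1).symm
  rw [Finset.prod_congr rfl h1, Finset.prod_comm]
  refine Finset.prod_congr rfl fun j hj => ?_
  rw [← Finset.prod_filter, Finset.prod_const]

lemma aux_pascal (z k : ℕ) (hz : 1 ≤ z) (hk : 1 ≤ k) :
    z.choose k = (z - 1).choose (k - 1) + (z - 1).choose k := by
  cases z with
  | zero => omega
  | succ z =>
    cases k with
    | zero => omega
    | succ k => simp [Nat.choose_succ_succ]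

lemma aux_sum_comm3 {α1 α2 α3 : Type*} {s1 : Finset α1} {s2 : Finset α2} {s3 : Finset α3}
    (f : α1 → α2 → α3 → ℝ) :
    ∑ i ∈ s1, ∑ j ∈ s2, ∑ I ∈ s3, f i j I = ∑ I ∈ s3, ∑ i ∈ s1, ∑ j ∈ s2, f i j I :=
  calc ∑ i ∈ s1, ∑ j ∈ s2, ∑ I ∈ s3, f i j I
      = ∑ i ∈ s1, ∑ I ∈ s3, ∑ j ∈ s2, f i j I :=
        Finset.sum_congr rfl fun i _ => Finset.sum_comm
    _ = ∑ I ∈ s3, ∑ i ∈ s1, ∑ j ∈ s2, f i j I := Finset.sum_comm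

lemma aux_mul_sum2 {α1 α2 : Type*} (s1 : Finset α1) (s2 : Finset α2) (b : ℝ)
    (f : α1 → α2 → ℝ) :
    ∑ i ∈ s1, ∑ j ∈ s2, b * f i j = b * ∑ i ∈ s1, ∑ j ∈ s2, f i j := by
  rw [Finset.mul_sum]
  exact Finset.sum_congr rfl fun i _ => (Finset.mul_sum _ _ _).symm


/-- Positive definiteness of the matrix
`M_{ij} = (c/C(n,ζ)) Σ_{|I|=ζ} λ_I (E_I)_{ij} − f_m·𝟏` under the cone condition, `2ζ ≥ n`,
and the bound `f_m < (K/n)·(c/(2C(n,ζ)))^{n/(n−ζ)}` with `K = C(n−2,ζ−1)`. -/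
theorem stmt_16 (n ζ : ℕ) (hn : 2 ≤ n) (hζ1 : 1 ≤ ζ) (hζ2 : ζ ≤ n - 1) (hζ3 : n ≤ 2 * ζ)
    (c : ℝ) (hc : 0 < c) (K : ℝ) (hK : K = ((n - 2).choose (ζ - 1) : ℝ)) (hKpos : 0 < K)
    (fm : ℝ) (hfm0 : 0 ≤ fm)
    (hfm : fm < K / n * (c / (2 * (n.choose ζ : ℝ))) ^ ((n : ℝ) / ((n : ℝ) - ζ)))
    (lam : Fin n → ℝ) (hlam : ∀ i, 0 < lam i)
    (hcone : ∀ i : Fin n,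
      c / (2 * (n.choose ζ : ℝ)) *
        (∑ t ∈ (Finset.univ.erase i).powersetCard (n - ζ), ∏ j ∈ t, 1 / lam j) < 1)
    (M : Matrix (Fin n) (Fin n) ℝ)
    (hM : ∀ i j, M i j = c / (n.choose ζ : ℝ) *
        (∑ I ∈ Finset.univ.powersetCard ζ,
          (∏ t ∈ I, lam t) * (if i ∉ I ∧ j ∉ I then (1 : ℝ) else 0)) - fm) :
    M.PosDef := by
  classical
  have hζn : ζ ≤ n := by omega
  have hCpos : (0:ℝ) < (n.choose ζ : ℝ) := by exact_mod_cast Nat.choose_pos hζn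
  set a : ℝ := c / (2 * (n.choose ζ : ℝ)) with ha
  have hapos : 0 < a := by positivity
  have hcast : ((n - ζ : ℕ) : ℝ) = (n : ℝ) - ζ := by
    rw [Nat.cast_sub hζn]
  have hnζR : (0:ℝ) < (n:ℝ) - (ζ:ℝ) := by
    rw [← hcast]; exact_mod_cast (by omega : 0 < n - ζ)
  -- Step A : every (n-ζ)-subset product exceeds a
  have stepA : ∀ t : Finset (Fin n), t.card = n - ζ → a < ∏ j ∈ t, lam j := by
    intro t ht
    have htne : t ≠ Finset.univ := by
      intro h; rw [h, Finset.card_univ, Fintype.card_fin] at ht; omega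
    obtain ⟨i, -, hi⟩ := Finset.exists_of_ssubset (Finset.ssubset_univ_iff.2 htne)
    have hmem : t ∈ (Finset.univ.erase i).powersetCard (n - ζ) := by
      rw [Finset.mem_powersetCard]
      exact ⟨Finset.subset_erase.2 ⟨Finset.subset_univ t, hi⟩, ht⟩
    have hterm : (∏ j ∈ t, 1 / lam j)
        ≤ ∑ t' ∈ (Finset.univ.erase i).powersetCard (n - ζ), ∏ j ∈ t', 1 / lam j :=
      Finset.single_le_sum (f := fun t' => ∏ j ∈ t', 1 / lam j)
        (fun t' _ => Finset.prod_nonneg fun j _ => by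
          have := hlam j; positivity) hmem
    have h2 : a * (∏ j ∈ t, 1 / lam j) < 1 :=
      lt_of_le_of_lt (mul_le_mul_of_nonneg_left hterm hapos.le) (hcone i)
    have hP : 0 < ∏ j ∈ t, lam j := Finset.prod_pos fun j _ => hlam j
    have h3 : (∏ j ∈ t, 1 / lam j) = (∏ j ∈ t, lam j)⁻¹ := by
      rw [← Finset.prod_inv_distrib]; simp [one_div]
    rw [h3, ← div_eq_mul_inv, div_lt_one hP] at h2
    exact h2
  -- Step B : every ζ-subset product is at least a ^ (ζ/(n-ζ))
  set q : ℝ := (ζ:ℝ) / ((n:ℝ) - ζ) with hq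
  have stepB : ∀ I ∈ (Finset.univ : Finset (Fin n)).powersetCard ζ,
      a ^ q ≤ ∏ j ∈ I, lam j := by
    intro I hI
    have hIcard : I.card = ζ := (Finset.mem_powersetCard.1 hI).2
    set N := ζ.choose (n - ζ) with hN
    set m := (ζ - 1).choose (n - ζ - 1) with hm
    have hmpos : 0 < m := Nat.choose_pos (by omega)
    have hL : 0 < ∏ j ∈ I, lam j := Finset.prod_pos fun j _ => hlam j
    have hprod : a ^ N ≤ (∏ j ∈ I, lam j) ^ m := by
      have h1 : ∏ _t ∈ I.powersetCard (n - ζ), a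
          ≤ ∏ t ∈ I.powersetCard (n - ζ), ∏ j ∈ t, lam j :=
        Finset.prod_le_prod (fun _ _ => hapos.le)
          (fun t ht => (stepA t (Finset.mem_powersetCard.1 ht).2).le)
      rw [Finset.prod_const, Finset.card_powersetCard, hIcard] at h1
      have h2 : ∏ t ∈ I.powersetCard (n - ζ), ∏ j ∈ t, lam j = (∏ j ∈ I, lam j) ^ m := by
        rw [aux_prod_powersetCard, ← Finset.prod_pow]
        refine Finset.prod_congr rfl fun j hj => ?_
        congr 1
        rw [aux_card_filter_mem I (n - ζ) j hj, hIcard]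
        have := aux_pascal ζ (n - ζ) hζ1 (by omega)
        omega
      rw [h2] at h1
      exact h1
    -- now convert to rpow
    have hNm : (N : ℝ) / (m : ℝ) = q := by
      have key : N * (n - ζ) = ζ * m := by
        have h1 := Nat.add_one_mul_choose_eq (ζ - 1) (n - ζ - 1)
        have e1 : ζ - 1 + 1 = ζ := by omega
        have e2 : n - ζ - 1 + 1 = n - ζ := by omega
        simp only [Nat.succ_eq_add_one, e1, e2] at h1
        rw [hN, hm]
        omega
      rw [hq, div_eq_div_iff (by exact_mod_cast hmpos.ne' : (m:ℝ) ≠ 0) hnζR.ne']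
      rw [← hcast]
      exact_mod_cast key
    have hmR : (0:ℝ) < (m:ℝ) := by exact_mod_cast hmpos
    calc a ^ q = a ^ ((N:ℝ) / (m:ℝ)) := by rw [hNm]
      _ = (a ^ (N:ℝ)) ^ ((m:ℝ)⁻¹) := by
          rw [← Real.rpow_mul hapos.le, div_eq_mul_inv]
      _ ≤ ((∏ j ∈ I, lam j) ^ ((m:ℕ):ℝ)) ^ ((m:ℝ)⁻¹) := by
          apply Real.rpow_le_rpow (by positivity) _ (by positivity)
          rw [Real.rpow_natCast, Real.rpow_natCast]
          exact hprod
      _ = ∏ j ∈ I, lam j := by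
          rw [← Real.rpow_mul hL.le, mul_inv_cancel₀ hmR.ne', Real.rpow_one]
  refine Matrix.PosDef.of_dotProduct_mulVec_pos ?_ ?_
  · -- symmetry
    ext i j
    rw [Matrix.conjTranspose_apply, star_trivial, hM, hM]
    have hcomm : (∑ I ∈ Finset.univ.powersetCard ζ,
          (∏ t ∈ I, lam t) * (if j ∉ I ∧ i ∉ I then (1:ℝ) else 0))
        = ∑ I ∈ Finset.univ.powersetCard ζ,
          (∏ t ∈ I, lam t) * (if i ∉ I ∧ j ∉ I then (1:ℝ) else 0) :=
      Finset.sum_congr rfl fun I _ => by by_cases h1 : i ∈ I <;> by_cases h2 : j ∈ I <;> simp [h1, h2]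
    rw [hcomm]
  · intro x hx
    set S := (Finset.univ : Finset (Fin n)).powersetCard ζ with hS
    set χ : Fin n → Finset (Fin n) → ℝ := fun i I => if i ∈ I then 0 else 1 with hχ
    have hsplit : ∀ (i j : Fin n) (I : Finset (Fin n)),
        (if i ∉ I ∧ j ∉ I then (1:ℝ) else 0) = χ i I * χ j I := by
      intro i j I
      by_cases hi : i ∈ I <;> by_cases hj : j ∈ I <;> simp [hχ, hi, hj]
    set T : Finset (Fin n) → ℝ := fun I => ∑ j, χ j I * x j with hT
    set s0 : ℝ := ∑ j, x j with hs0
    set X : ℝ := ∑ j, x j ^ 2 with hX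
    -- expand the quadratic form
    have hxMx : star x ⬝ᵥ M *ᵥ x = ∑ i, ∑ j, x i * (M i j * x j) := by
      simp [dotProduct, Matrix.mulVec, Finset.mul_sum]
    have hterm : ∀ i j, x i * (M i j * x j)
        = (c / (n.choose ζ:ℝ)) * (∑ I ∈ S, (∏ t ∈ I, lam t) * ((χ i I * x i) * (χ j I * x j)))
          - fm * (x i * x j) := by
      intro i j
      rw [hM i j]
      have w1 : x i * ((c / (n.choose ζ:ℝ) * (∑ I ∈ S,
            (∏ t ∈ I, lam t) * (if i ∉ I ∧ j ∉ I then (1:ℝ) else 0)) - fm) * x j)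
          = c / (n.choose ζ:ℝ) * ((x i * x j) * (∑ I ∈ S,
            (∏ t ∈ I, lam t) * (if i ∉ I ∧ j ∉ I then (1:ℝ) else 0))) - fm * (x i * x j) := by
        ring
      rw [w1, Finset.mul_sum]
      congr 2
      refine Finset.sum_congr rfl fun I _ => ?_
      rw [hsplit]
      ring
    have hTsq : ∀ I, T I ^ 2 = ∑ i, ∑ j, (χ i I * x i) * (χ j I * x j) := by
      intro I
      simp only [hT]
      rw [sq, Finset.sum_mul_sum]
    have hs0sq : s0 ^ 2 = ∑ i, ∑ j, x i * x j := by
      rw [hs0, sq, Finset.sum_mul_sum]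
    have hQ : star x ⬝ᵥ M *ᵥ x
        = c / (n.choose ζ:ℝ) * (∑ I ∈ S, (∏ t ∈ I, lam t) * T I ^ 2) - fm * s0 ^ 2 := by
      rw [hxMx, Finset.sum_congr rfl fun i _ => Finset.sum_congr rfl fun j _ => hterm i j]
      rw [Finset.sum_congr rfl fun i _ => Finset.sum_sub_distrib _ _, Finset.sum_sub_distrib]
      congr 1
      · rw [aux_mul_sum2]
        congr 1
        rw [aux_sum_comm3]
        refine Finset.sum_congr rfl fun I _ => ?_
        rw [hTsq I, Finset.mul_sum]
        exact Finset.sum_congr rfl fun i _ => (Finset.mul_sum _ _ _).symm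
      · rw [aux_mul_sum2]
        congr 1
        exact hs0sq.symm
    -- sum of squares identity
    have hNsum : ∀ i j : Fin n, (∑ I ∈ S, χ i I * χ j I)
        = (if i = j then ((n-1).choose ζ : ℝ) else ((n-2).choose ζ : ℝ)) := by
      intro i j
      rw [Finset.sum_congr rfl fun I _ => (hsplit i j I).symm, Finset.sum_boole]
      have h2 : S.filter (fun I => i ∉ I ∧ j ∉ I)
          = ((Finset.univ.erase i).erase j).powersetCard ζ := by
        ext t
        simp only [hS, Finset.mem_filter, Finset.mem_powersetCard, Finset.subset_erase]
        tauto
      rw [h2, Finset.card_powersetCard]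
      by_cases h : i = j
      · subst h
        rw [Finset.erase_idem, Finset.card_erase_of_mem (Finset.mem_univ _),
          Finset.card_univ, Fintype.card_fin]
        simp
      · rw [Finset.card_erase_of_mem (Finset.mem_erase.2 ⟨Ne.symm h, Finset.mem_univ _⟩),
          Finset.card_erase_of_mem (Finset.mem_univ _), Finset.card_univ, Fintype.card_fin]
        have e : n - 1 - 1 = n - 2 := by omega
        rw [e]
        simp [h]
    have hpas : ((n-1).choose ζ : ℝ) = ((n-2).choose ζ : ℝ) + K := by
      have h1 := aux_pascal (n-1) ζ (by omega) hζ1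
      have e : n - 1 - 1 = n - 2 := by omega
      rw [e] at h1
      rw [hK, h1]
      push_cast
      ring
    have key2 : ∑ I ∈ S, T I ^ 2 = ((n-2).choose ζ : ℝ) * s0 ^ 2 + K * X := by
      rw [Finset.sum_congr rfl fun I (_ : I ∈ S) => hTsq I, ← aux_sum_comm3]
      have h3 : ∀ i j : Fin n, (∑ I ∈ S, (χ i I * x i) * (χ j I * x j))
          = x i * x j * (((n-2).choose ζ : ℝ) + (if i = j then K else 0)) := by
        intro i j
        have : ∀ I, (χ i I * x i) * (χ j I * x j) = (x i * x j) * (χ i I * χ j I) :=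
          fun I => by ring
        rw [Finset.sum_congr rfl fun I _ => this I, ← Finset.mul_sum, hNsum i j]
        by_cases h : i = j <;> simp [h, hpas]
      rw [Finset.sum_congr rfl fun i (_ : i ∈ Finset.univ) =>
        Finset.sum_congr rfl fun j (_ : j ∈ Finset.univ) => h3 i j]
      have expand : ∀ i j : Fin n, x i * x j * (((n-2).choose ζ : ℝ) + (if i = j then K else 0))
          = ((n-2).choose ζ : ℝ) * (x i * x j) + (if i = j then x i * x j * K else 0) := by
        intro i j; by_cases h : i = j <;> simp [h] <;> ring
      rw [Finset.sum_congr rfl fun i (_ : i ∈ Finset.univ) =>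
        Finset.sum_congr rfl fun j (_ : j ∈ Finset.univ) => expand i j]
      rw [Finset.sum_congr rfl fun i (_ : i ∈ Finset.univ) => Finset.sum_add_distrib,
        Finset.sum_add_distrib]
      congr 1
      · rw [aux_mul_sum2]
        congr 1
        exact hs0sq.symm
      · rw [Finset.sum_congr rfl fun i (_ : i ∈ Finset.univ) => Finset.sum_ite_eq Finset.univ i _]
        simp only [Finset.mem_univ, if_true]
        rw [hX, Finset.mul_sum]
        exact Finset.sum_congr rfl fun i _ => by ring
    -- final estimates
    have hXpos : 0 < X := by
      obtain ⟨i, hi⟩ : ∃ i, x i ≠ 0 := by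
        by_contra h
        push_neg at h
        exact hx (funext h)
      have h1 : (0:ℝ) < x i ^ 2 := by positivity
      have h2 : x i ^ 2 ≤ X := by
        rw [hX]
        exact Finset.single_le_sum (f := fun j => x j ^ 2) (fun j _ => sq_nonneg _)
          (Finset.mem_univ i)
      linarith
    have hCS : s0 ^ 2 ≤ (n:ℝ) * X := by
      have h1 := sq_sum_le_card_mul_sum_sq (s := (Finset.univ : Finset (Fin n))) (f := x)
      rw [Finset.card_univ, Fintype.card_fin] at h1
      rw [hs0, hX]
      exact h1
    have hsum_ge : a ^ q * (∑ I ∈ S, T I ^ 2) ≤ ∑ I ∈ S, (∏ t ∈ I, lam t) * T I ^ 2 := by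
      rw [Finset.mul_sum]
      exact Finset.sum_le_sum fun I hI => mul_le_mul_of_nonneg_right (stepB I hI) (sq_nonneg _)
    have hcC : c / (n.choose ζ : ℝ) = 2 * a := by
      rw [ha]
      field_simp
    set P : ℝ := a ^ ((n:ℝ)/((n:ℝ)-(ζ:ℝ))) with hP
    have hPpos : 0 < P := Real.rpow_pos_of_pos hapos _
    have hap : a * a ^ q = P := by
      have h1 : P = a ^ ((1:ℝ) + q) := by
        rw [hP]
        congr 1
        rw [hq]
        field_simp
        ring
      rw [h1, Real.rpow_add hapos, Real.rpow_one]
    have hqpos : (0:ℝ) < a ^ q := Real.rpow_pos_of_pos hapos _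
    have hfm' : fm * n < K * P := by
      have hn0 : (0:ℝ) < (n:ℝ) := by positivity
      have h1 : fm * n < (K / n * P) * n := by
        apply mul_lt_mul_of_pos_right _ hn0
        rw [hP, ha]
        exact hfm
      calc fm * n < (K / n * P) * n := h1
        _ = K * P := by field_simp
    have hA2 : (0:ℝ) ≤ ((n-2).choose ζ : ℝ) := by positivity
    have e1 : a ^ q * (K * X) ≤ ∑ I ∈ S, (∏ t ∈ I, lam t) * T I ^ 2 := by
      refine le_trans ?_ hsum_ge
      rw [key2]
      have h0 : (0:ℝ) ≤ ((n-2).choose ζ : ℝ) * s0 ^ 2 := by positivity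
      have h1 : K * X ≤ ((n-2).choose ζ : ℝ) * s0 ^ 2 + K * X := by linarith
      exact mul_le_mul_of_nonneg_left h1 hqpos.le
    have hgoal : 0 < star x ⬝ᵥ M *ᵥ x := by
      rw [hQ, hcC]
      have e2 : 2 * a * (a ^ q * (K * X)) ≤ 2 * a * (∑ I ∈ S, (∏ t ∈ I, lam t) * T I ^ 2) :=
        mul_le_mul_of_nonneg_left e1 (by positivity)
      have e3 : 2 * a * (a ^ q * (K * X)) = 2 * P * (K * X) := by
        rw [← hap]; ring
      have e4 : fm * s0 ^ 2 ≤ fm * ((n:ℝ) * X) := mul_le_mul_of_nonneg_left hCS hfm0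
      have e5 : fm * (n:ℝ) * X < K * P * X := mul_lt_mul_of_pos_right hfm' hXpos
      have e6 : 0 < K * P * X := mul_pos (mul_pos hKpos hPpos) hXpos
      have e8 : fm * ((n:ℝ) * X) = fm * (n:ℝ) * X := by ring
      have e7 : 2 * P * (K * X) = 2 * (K * P * X) := by ring
      linarith [e2, e3, e4, e5, e6, e7, e8]
    exact hgoal
end
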